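/- Let I, K ≥ 1 and ρ > 0, and let X ∈ ℝ^{I×K} be entrywise nonnegative with every column summing to ρ, rank(X) = K, and X^T satisfying the SSC. Let Q ∈ ℝ^{K×K} be any matrix such that X̂ = X·Q is entrywise nonnegative and every column of X̂ sums to ρ. Then |det(Q)| ≤ 1, and if |det(Q)| = 1 then Q is a permutation matrix. -/

import Mathlib

open Matrix BigOperators

/-- Euclidean norm of a real vector. -/
noncomputable def l2norm {m : Type*} [Fintype m] (x : m → ℝ) : ℝ :=
  Real.sqrt (∑ i, (x i) ^ 2)

/-- `P` is a permutation matrix. -/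
def IsPermMatrix {K : ℕ} (P : Matrix (Fin K) (Fin K) ℝ) : Prop :=
  ∃ σ : Equiv.Perm (Fin K), ∀ i j, P i j = if σ i = j then 1 else 0

/-- The conic hull of the columns of `H`. -/
def coneOf {K : ℕ} {J : Type*} [Fintype J] (H : Matrix (Fin K) J ℝ) : Set (Fin K → ℝ) :=
  {x | ∃ θ : J → ℝ, (∀ j, 0 ≤ θ j) ∧ x = H.mulVec θ}

/-- The second-order cone `C = {x : √(K-1) ‖x‖₂ ≤ ∑ᵢ xᵢ}`. -/
def socC (K : ℕ) : Set (Fin K → ℝ) :=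
  {x | Real.sqrt ((K : ℝ) - 1) * l2norm x ≤ ∑ i, x i}

/-- The sufficiently scattered condition. -/
def SSC {K : ℕ} {J : Type*} [Fintype J] (H : Matrix (Fin K) J ℝ) : Prop :=
  socC K ⊆ coneOf H ∧
  ∀ Q : Matrix (Fin K) (Fin K) ℝ, Qᵀ * Q = 1 → ¬ IsPermMatrix Q → ¬ (coneOf H ⊆ coneOf Q)

lemma one_mem_socC {K : ℕ} : (fun _ : Fin K => (1:ℝ)) ∈ socC K := by
  unfold socC l2norm
  simp only [Set.mem_setOf_eq, one_pow, Finset.sum_const, Finset.card_univ, Fintype.card_fin,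
    nsmul_eq_mul, mul_one]
  calc Real.sqrt ((K:ℝ) - 1) * Real.sqrt K ≤ Real.sqrt K * Real.sqrt K := by
        gcongr; linarith
    _ = K := Real.mul_self_sqrt (Nat.cast_nonneg K)

lemma dual_soc {K : ℕ} (hK : 1 ≤ K) (y : Fin K → ℝ)
    (hy : ∀ x ∈ socC K, 0 ≤ ∑ j, y j * x j) :
    ∑ j, (y j)^2 ≤ (∑ j, y j)^2 ∧ 0 ≤ ∑ j, y j := by
  have hKR : (1:ℝ) ≤ K := by exact_mod_cast hK
  have hs : 0 ≤ ∑ j, y j := by simpa using hy _ one_mem_socC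
  refine ⟨?_, hs⟩
  set s := ∑ j, y j with hsdef
  set c := s / K with hcdef
  have hK0 : (K:ℝ) ≠ 0 := by positivity
  have hKc : (K:ℝ) * c = s := by rw [hcdef]; field_simp
  set v : Fin K → ℝ := fun j => y j - c with hvdef
  have hvsum : ∑ j, v j = 0 := by
    simp [hvdef, Finset.sum_sub_distrib, ← hsdef, hKc]
  by_cases hv0 : ∀ j, v j = 0
  · have hyc : ∀ j, y j = c := fun j => by have := hv0 j; simp [hvdef] at this; linarith
    have h1 : ∑ j, (y j)^2 = K * c^2 := by simp [hyc, Finset.sum_const, mul_comm]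
    have h2 : s = K * c := by rw [hsdef]; simp [hyc, Finset.sum_const]
    rw [h1, h2]
    nlinarith [sq_nonneg c]
  · push_neg at hv0
    obtain ⟨j0, hj0⟩ := hv0
    set nv2 := ∑ j, (v j)^2 with hnvdef
    have hnv2pos : 0 < nv2 := by
      apply Finset.sum_pos' (fun i _ => sq_nonneg _)
      exact ⟨j0, Finset.mem_univ _, by positivity⟩
    have hK2 : 2 ≤ K := by
      rcases Nat.lt_or_ge K 2 with h | h
      · exfalso
        have hK1 : K = 1 := by omega
        subst hK1
        have h0 : v 0 = 0 := by simpa using hvsum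
        exact hj0 (by rw [Subsingleton.elim j0 0]; exact h0)
      · exact h
    have hK1R : (0:ℝ) < (K:ℝ) - 1 := by
      have : (2:ℝ) ≤ K := by exact_mod_cast hK2
      linarith
    set t : ℝ := Real.sqrt ((K:ℝ) / ((K:ℝ) - 1)) / Real.sqrt nv2 with htdef
    have ht0 : 0 ≤ t := by positivity
    have ht2 : t^2 * nv2 = (K:ℝ) / ((K:ℝ) - 1) := by
      rw [htdef, div_pow, Real.sq_sqrt (by positivity), Real.sq_sqrt hnv2pos.le]
      field_simp
    set x : Fin K → ℝ := fun j => 1 - t * v j with hxdef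
    have hxsum : ∑ j, x j = K := by
      simp [hxdef, Finset.sum_sub_distrib, ← Finset.mul_sum, hvsum]
    have hxsq : ∑ j, (x j)^2 = K + (K:ℝ) / ((K:ℝ) - 1) := by
      have he : ∀ j, (x j)^2 = 1 - 2 * t * v j + t^2 * (v j)^2 := by
        intro j; rw [hxdef]; ring
      rw [Finset.sum_congr rfl (fun j _ => he j)]
      simp [Finset.sum_add_distrib, Finset.sum_sub_distrib, ← Finset.mul_sum, hvsum, ← hnvdef, ht2]
    have hxC : x ∈ socC K := by
      unfold socC l2norm
      simp only [Set.mem_setOf_eq, hxsum, hxsq]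
      rw [← Real.sqrt_mul (by linarith)]
      have he : ((K:ℝ) - 1) * ((K:ℝ) + (K:ℝ)/((K:ℝ)-1)) = (K:ℝ)^2 := by
        field_simp; ring
      rw [he, Real.sqrt_sq (by positivity)]
    have hyv : ∑ j, y j * v j = nv2 := by
      have he : ∀ j, y j * v j = c * v j + (v j)^2 := by
        intro j
        have hyj : y j = c + v j := by simp [hvdef]
        rw [hyj]; ring
      rw [Finset.sum_congr rfl (fun j _ => he j)]
      simp [Finset.sum_add_distrib, ← Finset.mul_sum, hvsum, hnvdef]
    have hkey : 0 ≤ s - t * nv2 := by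
      have h := hy x hxC
      have he : ∑ j, y j * x j = s - t * ∑ j, y j * v j := by
        simp only [hxdef, mul_sub, mul_one]
        rw [Finset.sum_sub_distrib, ← hsdef, Finset.mul_sum]
        congr 1
        exact Finset.sum_congr rfl (fun j _ => by ring)
      rw [he, hyv] at h
      exact h
    have hsqnv : Real.sqrt nv2 ≠ 0 := by positivity
    have ha : Real.sqrt ((K:ℝ)/((K:ℝ)-1)) * Real.sqrt nv2 ≤ s := by
      have he : t * nv2 = Real.sqrt ((K:ℝ)/((K:ℝ)-1)) * Real.sqrt nv2 := by
        rw [htdef, div_mul_eq_mul_div, mul_div_assoc, Real.div_sqrt]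
      linarith [hkey, he ▸ hkey]
    have hb : ((K:ℝ)/((K:ℝ)-1)) * nv2 ≤ s^2 := by
      have h2 := mul_self_le_mul_self (by positivity) ha
      calc ((K:ℝ)/((K:ℝ)-1)) * nv2
          = (Real.sqrt ((K:ℝ)/((K:ℝ)-1)) * Real.sqrt nv2) * (Real.sqrt ((K:ℝ)/((K:ℝ)-1)) * Real.sqrt nv2) := by
            rw [mul_mul_mul_comm, Real.mul_self_sqrt (by positivity), Real.mul_self_sqrt hnv2pos.le]
        _ ≤ s * s := h2
        _ = s^2 := (sq s).symm
    have hb2 : (K:ℝ) * nv2 ≤ s^2 * ((K:ℝ)-1) := by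
      have h3 := mul_le_mul_of_nonneg_right hb hK1R.le
      have h4 : ((K:ℝ)/((K:ℝ)-1)) * nv2 * ((K:ℝ)-1) = (K:ℝ) * nv2 := by
        field_simp
      linarith [h3, h4]
    have hy2 : ∑ j, (y j)^2 = (K:ℝ) * c^2 + nv2 := by
      have he : ∀ j, (y j)^2 = c^2 + 2*c*(v j) + (v j)^2 := by
        intro j
        have hyj : y j = c + v j := by simp [hvdef]
        rw [hyj]; ring
      rw [Finset.sum_congr rfl (fun j _ => he j)]
      have h4 : ∑ j, (c^2 + 2*c*(v j) + (v j)^2) = (K:ℝ)*c^2 + 2*c*(∑ j, v j) + nv2 := by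
        rw [Finset.sum_add_distrib, Finset.sum_add_distrib, ← Finset.mul_sum]
        simp [Finset.sum_const, mul_comm, hnvdef]
      rw [h4, hvsum]; ring
    rw [hy2]
    have hs2 : s^2 = (K:ℝ)^2 * c^2 := by rw [← hKc]; ring
    nlinarith [hb2, hs2, hK1R, sq_nonneg c]

lemma prod_le_one_of_sum {K : ℕ} (lam : Fin K → ℝ) (h0 : ∀ i, 0 ≤ lam i)
    (hs : ∑ i, lam i ≤ K) : ∏ i, lam i ≤ 1 := by
  by_cases hz : ∃ i, lam i = 0
  · obtain ⟨i, hi⟩ := hz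
    rw [Finset.prod_eq_zero (Finset.mem_univ i) hi]; norm_num
  · push_neg at hz
    have hpos : ∀ i, 0 < lam i := fun i => lt_of_le_of_ne (h0 i) (Ne.symm (hz i))
    have h1 : Real.exp (∑ i, Real.log (lam i)) = ∏ i, lam i := by
      rw [Real.exp_sum]
      exact Finset.prod_congr rfl (fun i _ => Real.exp_log (hpos i))
    have h2 : ∑ i, Real.log (lam i) ≤ 0 := by
      have ha : ∑ i, Real.log (lam i) ≤ ∑ i, (lam i - 1) :=
        Finset.sum_le_sum (fun i _ => Real.log_le_sub_one_of_pos (hpos i))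
      have hb : ∑ i, (lam i - 1) = (∑ i, lam i) - K := by
        simp [Finset.sum_sub_distrib]
      linarith
    rw [← h1]
    exact Real.exp_le_one_iff.mpr h2

lemma all_one_of_prod {K : ℕ} (lam : Fin K → ℝ) (h0 : ∀ i, 0 ≤ lam i)
    (hs : ∑ i, lam i ≤ K) (hp : ∏ i, lam i = 1) : ∀ i, lam i = 1 := by
  have hpos : ∀ i, 0 < lam i := by
    intro i
    rcases (h0 i).lt_or_eq with h | h
    · exact h
    · exfalso; rw [Finset.prod_eq_zero (Finset.mem_univ i) h.symm] at hp; norm_num at hp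
  have hlog : ∑ i, Real.log (lam i) = 0 := by
    rw [← Real.log_prod (fun i _ => (hpos i).ne'), hp, Real.log_one]
  have hterm : ∀ i ∈ Finset.univ, 0 ≤ lam i - 1 - Real.log (lam i) := by
    intro i _
    have := Real.log_le_sub_one_of_pos (hpos i)
    linarith
  have hsum0 : ∑ i, (lam i - 1 - Real.log (lam i)) ≤ 0 := by
    simp only [Finset.sum_sub_distrib, hlog, Finset.sum_const, Finset.card_univ,
      Fintype.card_fin, nsmul_eq_mul, mul_one]
    linarith
  have heq : ∀ i ∈ Finset.univ, lam i - 1 - Real.log (lam i) = 0 := by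
    rw [← Finset.sum_eq_zero_iff_of_nonneg hterm]
    exact le_antisymm hsum0 (Finset.sum_nonneg hterm)
  intro i
  by_contra hne
  have := Real.log_lt_sub_one_of_pos (hpos i) hne
  have h2 := heq i (Finset.mem_univ i)
  linarith

lemma trace_eq_sum_eigs {K : ℕ} {G : Matrix (Fin K) (Fin K) ℝ} (hG : G.IsHermitian) :
    G.trace = ∑ i, hG.eigenvalues i := by
  conv_lhs => rw [hG.spectral_theorem]
  rw [Unitary.conjStarAlgAut_apply, Matrix.trace_mul_cycle, Matrix.UnitaryGroup.star_mul_self, one_mul,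
    Matrix.trace_diagonal]
  simp

lemma det_eq_prod_eigs {K : ℕ} {G : Matrix (Fin K) (Fin K) ℝ} (hG : G.IsHermitian) :
    G.det = ∏ i, hG.eigenvalues i := by
  have := hG.det_eq_prod_eigenvalues
  simpa using this

lemma herm_eq_one_of_eigs_one {K : ℕ} {G : Matrix (Fin K) (Fin K) ℝ} (hG : G.IsHermitian)
    (h1 : ∀ i, hG.eigenvalues i = 1) : G = 1 := by
  have hst := hG.spectral_theorem
  have hd : Matrix.diagonal (RCLike.ofReal ∘ hG.eigenvalues) = (1 : Matrix (Fin K) (Fin K) ℝ) := by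
    funext i j
    by_cases h : i = j <;> simp [Matrix.diagonal_apply, Matrix.one_apply, h1, h]
  rw [hst, hd, map_one]


theorem stmt4 {I K : ℕ} (hI : 1 ≤ I) (hK : 1 ≤ K) (ρ : ℝ) (hρ : 0 < ρ)
    (X : Matrix (Fin I) (Fin K) ℝ)
    (hX0 : ∀ i k, 0 ≤ X i k) (hX1 : ∀ k, ∑ i, X i k = ρ)
    (hXrank : X.rank = K) (hXssc : SSC Xᵀ)
    (Q : Matrix (Fin K) (Fin K) ℝ)
    (hXQ0 : ∀ i k, 0 ≤ (X * Q) i k) (hXQ1 : ∀ k, ∑ i, (X * Q) i k = ρ) :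
    |Q.det| ≤ 1 ∧ (|Q.det| = 1 → IsPermMatrix Q) := by
  -- columns of Q sum to 1
  have hQsum : ∀ k, ∑ j, Q j k = 1 := by
    intro k
    have h := hXQ1 k
    have h2 : ∑ i, (X * Q) i k = ρ * ∑ j, Q j k := by
      simp only [Matrix.mul_apply]
      rw [Finset.sum_comm]
      rw [Finset.mul_sum]
      refine Finset.sum_congr rfl (fun j _ => ?_)
      rw [← Finset.sum_mul, hX1 j]
    rw [h2] at h
    have := mul_left_cancel₀ hρ.ne' (h.trans (mul_one ρ).symm)
    exact this
  -- columns of Q are nonneg on the cone of rows of X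
  have hQpos : ∀ k, ∀ x ∈ coneOf Xᵀ, 0 ≤ ∑ j, Q j k * x j := by
    intro k x hx
    obtain ⟨θ, hθ0, hxe⟩ := hx
    have hxj : ∀ j, x j = ∑ i, X i j * θ i := by
      intro j
      rw [hxe]
      simp [Matrix.mulVec, dotProduct, Matrix.transpose_apply]
    have : ∑ j, Q j k * x j = ∑ i, θ i * (X * Q) i k := by
      simp only [hxj, Finset.mul_sum, Matrix.mul_apply]
      rw [Finset.sum_comm]
      exact Finset.sum_congr rfl (fun i _ => Finset.sum_congr rfl (fun j _ => by ring))
    rw [this]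
    exact Finset.sum_nonneg (fun i _ => mul_nonneg (hθ0 i) (hXQ0 i k))
  -- squared column norms at most 1
  have hcolsq : ∀ k, ∑ j, (Q j k)^2 ≤ 1 := by
    intro k
    have hd := dual_soc hK (fun j => Q j k) (fun x hx => hQpos k x (hXssc.1 hx))
    have := hd.1
    rwa [hQsum k, one_pow] at this
  -- the Gram matrix
  set G := Qᵀ * Q with hGdef
  have hGsd : G.PosSemidef := by
    rw [hGdef]
    simpa using Matrix.posSemidef_conjTranspose_mul_self Q
  have hG : G.IsHermitian := hGsd.1
  have htr : G.trace = ∑ k, ∑ j, (Q j k)^2 := by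
    simp [Matrix.trace, Matrix.diag, hGdef, Matrix.mul_apply, Matrix.transpose_apply, sq]
  have htrK : G.trace ≤ K := by
    rw [htr]
    calc ∑ k, ∑ j, (Q j k)^2 ≤ ∑ k : Fin K, (1:ℝ) := Finset.sum_le_sum (fun k _ => hcolsq k)
      _ = K := by simp
  have hsumeig : ∑ i, hG.eigenvalues i ≤ K := by
    rw [← trace_eq_sum_eigs hG]; exact htrK
  have heig0 : ∀ i, 0 ≤ hG.eigenvalues i := hGsd.eigenvalues_nonneg
  have hdetG : G.det = Q.det ^ 2 := by
    rw [hGdef, Matrix.det_mul, Matrix.det_transpose, sq]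
  have hsq : Q.det ^ 2 ≤ 1 := by
    rw [← hdetG, det_eq_prod_eigs hG]
    exact prod_le_one_of_sum _ heig0 hsumeig
  constructor
  · nlinarith [abs_nonneg Q.det, sq_abs Q.det]
  · intro hdet1
    have hprod : ∏ i, hG.eigenvalues i = 1 := by
      rw [← det_eq_prod_eigs hG, hdetG, ← sq_abs, hdet1, one_pow]
    have heig1 := all_one_of_prod _ heig0 hsumeig hprod
    have hGone : Qᵀ * Q = 1 := by
      rw [← hGdef]; exact herm_eq_one_of_eigs_one hG heig1
    by_contra hnp
    refine hXssc.2 Q hGone hnp ?_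
    intro x hx
    refine ⟨Qᵀ.mulVec x, fun k => ?_, ?_⟩
    · have : (Qᵀ.mulVec x) k = ∑ j, Q j k * x j := by
        simp [Matrix.mulVec, dotProduct, Matrix.transpose_apply]
      rw [this]
      exact hQpos k x hx
    · rw [Matrix.mulVec_mulVec, mul_eq_one_comm.mp hGone, Matrix.one_mulVec]
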